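/- Let K be a positive integer, λ ∈ [0,1) a real number, 𝟙 ∈ ℝ^K the all-ones vector, and p̂ ∈ ℝ^K a vector with Σᵢ p̂ᵢ = 1. Let 𝗒 ∈ ℝ^K, and define m̄₁ := (1/K)·Σᵢ 𝗒ᵢ, m̄₂ := (1/K)·Σᵢ 𝗒ᵢ², m₁ := Σᵢ 𝗒ᵢ·p̂ᵢ, m₂ := Σᵢ 𝗒ᵢ²·p̂ᵢ. Then (1/(1−λ)²)·𝗒ᵀ·(I − (λ/K)·𝟙𝟙ᵀ)·diag((1−λ)·p̂ + (λ/K)·𝟙)·(I − (λ/K)·𝟙𝟙ᵀ)·𝗒 = m₂/(1−λ) + (λ·m̄₂ − λ²·m̄₁²)/(1−λ)² − (2λ·m̄₁/(1−λ))·m₁. -/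

import Mathlib

open Matrix

/-- Exact quadratic-form computation `𝗒ᵀ Q⁻¹ diag(Q p̂) Q⁻ᵀ 𝗒` for the Uniform-Prior-DP
mechanism, where `Q⁻¹ = (1/(1−λ))(I − (λ/K)𝟙𝟙ᵀ)` and `Q p̂ = (1−λ)p̂ + (λ/K)𝟙`. -/
theorem uniform_prior_dp_quadratic_form
    (K : ℕ) (hK : 0 < K) (lam : ℝ) (hlam0 : 0 ≤ lam) (hlam1 : lam < 1)
    (phat : Fin K → ℝ) (hsum : ∑ i, phat i = 1)
    (y : Fin K → ℝ)
    (mb1 mb2 m1 m2 : ℝ)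
    (hmb1 : mb1 = (1 / (K : ℝ)) * ∑ i, y i)
    (hmb2 : mb2 = (1 / (K : ℝ)) * ∑ i, y i ^ 2)
    (hm1 : m1 = ∑ i, y i * phat i)
    (hm2 : m2 = ∑ i, y i ^ 2 * phat i) :
    (1 / (1 - lam) ^ 2) *
      (y ⬝ᵥ ((((1 : Matrix (Fin K) (Fin K) ℝ)
            - (lam / (K : ℝ)) • Matrix.vecMulVec (fun _ => 1) (fun _ => 1))
          * Matrix.diagonal (fun i => (1 - lam) * phat i + lam / (K : ℝ))
          * ((1 : Matrix (Fin K) (Fin K) ℝ)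
            - (lam / (K : ℝ)) • Matrix.vecMulVec (fun _ => 1) (fun _ => 1))) *ᵥ y))
      = m2 / (1 - lam) + (lam * mb2 - lam ^ 2 * mb1 ^ 2) / (1 - lam) ^ 2
        - (2 * lam * mb1 / (1 - lam)) * m1 := by
  have hKne : (K:ℝ) ≠ 0 := Nat.cast_ne_zero.mpr hK.ne'
  have hlne : (1:ℝ) - lam ≠ 0 := by linarith
  set c : ℝ := lam / K with hc
  set d : Fin K → ℝ := fun i => (1 - lam) * phat i + c with hd
  have hA : ∀ w : Fin K → ℝ,
      (((1 : Matrix (Fin K) (Fin K) ℝ) - c • Matrix.vecMulVec (fun _ => (1:ℝ)) (fun _ => 1)) *ᵥ w)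
        = fun i => w i - c * ∑ j, w j := by
    intro w; funext i
    simp [Matrix.mulVec, dotProduct, Matrix.sub_apply, Matrix.one_apply,
      Matrix.vecMulVec_apply, sub_mul, Finset.sum_sub_distrib, Finset.mul_sum]
  rw [show (((1 : Matrix (Fin K) (Fin K) ℝ)
            - c • Matrix.vecMulVec (fun _ => 1) (fun _ => 1))
          * Matrix.diagonal d
          * ((1 : Matrix (Fin K) (Fin K) ℝ)
            - c • Matrix.vecMulVec (fun _ => 1) (fun _ => 1))) *ᵥ y
      = ((1 : Matrix (Fin K) (Fin K) ℝ) - c • Matrix.vecMulVec (fun _ => 1) (fun _ => 1)) *ᵥ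
        (Matrix.diagonal d *ᵥ
          (((1 : Matrix (Fin K) (Fin K) ℝ) - c • Matrix.vecMulVec (fun _ => 1) (fun _ => 1)) *ᵥ y))
      from by rw [Matrix.mulVec_mulVec, Matrix.mulVec_mulVec, Matrix.mul_assoc]]
  rw [hA y]
  set S : ℝ := ∑ j, y j with hS
  set z : Fin K → ℝ := fun i => y i - c * S with hz
  have hDz : Matrix.diagonal d *ᵥ z = fun i => d i * z i := by
    funext i; rw [Matrix.mulVec_diagonal]
  rw [hDz, hA]
  set T : ℝ := ∑ j, d j * z j with hT
  have hdot : y ⬝ᵥ (fun i => d i * z i - c * T) = ∑ i, y i * (d i * z i) - c * T * S := by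
    simp [dotProduct, mul_sub, Finset.sum_sub_distrib, ← Finset.sum_mul]
    ring
  rw [hdot]
  -- expand T and ∑ y d z in terms of moments
  have h2 : ∑ i, y i ^ 2 = K * mb2 := by rw [hmb2]; field_simp
  have h1 : S = K * mb1 := by rw [hS, hmb1]; field_simp; rfl
  have hT' : T = (1 - lam) * m1 - (1 - lam) * c * S + c * S - c * c * S * K := by
    have e : ∀ i : Fin K, d i * z i
        = (1 - lam) * (y i * phat i) - (1 - lam) * c * S * phat i + c * y i - c * c * S := by
      intro i; simp only [hd, hz]; ring
    rw [hT, Finset.sum_congr rfl (fun i _ => e i)]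
    rw [Finset.sum_sub_distrib, Finset.sum_add_distrib, Finset.sum_sub_distrib,
      ← Finset.mul_sum, ← Finset.mul_sum, ← Finset.mul_sum, hsum, ← hS, ← hm1,
      Finset.sum_const, Finset.card_univ, Fintype.card_fin, nsmul_eq_mul]
    ring
  have hydz : ∑ i, y i * (d i * z i)
      = (1 - lam) * m2 + c * (K * mb2) - c * S * ((1 - lam) * m1) - c * S * (c * S) := by
    have e : ∀ i : Fin K, y i * (d i * z i)
        = (1 - lam) * (y i ^ 2 * phat i) + c * (y i ^ 2)
          - c * S * ((1 - lam) * (y i * phat i)) - c * S * (c * y i) := by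
      intro i; simp only [hd, hz]; ring
    rw [Finset.sum_congr rfl (fun i _ => e i)]
    rw [Finset.sum_sub_distrib, Finset.sum_sub_distrib, Finset.sum_add_distrib,
      ← Finset.mul_sum, ← Finset.mul_sum, ← Finset.mul_sum, ← Finset.mul_sum, ← Finset.mul_sum,
      ← hm2, ← hm1, h2, ← Finset.mul_sum, ← hS]
  rw [hydz, hT', hc, h1]
  field_simp
  ring
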